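/- Let G be a graph with m edges and adjacency matrix A. If G admits an orientation D such that H_{π/3}(D) has spectrum symmetric about 0, then trace(A³) ≤ −18·m·λ_min(A), where λ_min(A) is the least eigenvalue of A. -/

import Mathlib

open Matrix

lemma psd_diag_nonneg {n : ℕ} {M : Matrix (Fin n) (Fin n) ℝ} (hM : M.PosSemidef) (i : Fin n) :
    0 ≤ M i i := by
  exact hM.diag_nonneg

lemma trace_mul_psd_ge {n : ℕ} (A M : Matrix (Fin n) (Fin n) ℝ) (hA : A.IsHermitian)
    (hM : M.PosSemidef) :
    (⨅ i, hA.eigenvalues i) * M.trace ≤ (A * M).trace := by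
  set U : Matrix (Fin n) (Fin n) ℝ := (hA.eigenvectorUnitary : Matrix (Fin n) (Fin n) ℝ) with hUdef
  have hU : U * star U = 1 := (Matrix.mem_unitaryGroup_iff).mp hA.eigenvectorUnitary.2
  have hU' : star U * U = 1 := (Matrix.mem_unitaryGroup_iff').mp hA.eigenvectorUnitary.2
  set N := star U * M * U with hN
  have hNpsd : N.PosSemidef := hM.conjTranspose_mul_mul_same U
  have hd : (RCLike.ofReal ∘ hA.eigenvalues : Fin n → ℝ) = hA.eigenvalues := rfl
  have h1 : (A * M).trace = ∑ i, hA.eigenvalues i * N i i := by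
    conv_lhs => rw [hA.spectral_theorem, Unitary.conjStarAlgAut_apply, hd, ← hUdef]
    have e1 : U * diagonal hA.eigenvalues * star U * M
        = U * (diagonal hA.eigenvalues * (star U * M)) := by
      simp [Matrix.mul_assoc]
    have e2 : diagonal hA.eigenvalues * (star U * M) * U = diagonal hA.eigenvalues * N := by
      rw [hN]; simp [Matrix.mul_assoc]
    rw [e1, Matrix.trace_mul_comm U, e2]
    simp [Matrix.trace, Matrix.diag, Matrix.diagonal_mul]
  have h2 : N.trace = M.trace := by
    rw [hN, Matrix.trace_mul_cycle, hU, Matrix.one_mul]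
  rw [h1, ← h2]
  have : N.trace = ∑ i, N i i := rfl
  rw [this, Finset.mul_sum]
  apply Finset.sum_le_sum
  intro i _
  exact mul_le_mul_of_nonneg_right
    (ciInf_le (Set.Finite.bddBelow (Set.finite_range _)) i) (psd_diag_nonneg hNpsd i)

set_option maxHeartbeats 1000000 in
theorem stmt_14 (n : ℕ) (G : SimpleGraph (Fin n)) [DecidableRel G.Adj]
    (hA : (G.adjMatrix ℝ).IsHermitian)
    (arc : Fin n → Fin n → Prop) [DecidableRel arc]
    (hasym : ∀ u v, arc u v → ¬ arc v u)
    (horient : ∀ u v, G.Adj u v ↔ (arc u v ∨ arc v u))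
    (H : Matrix (Fin n) (Fin n) ℂ)
    (hH : ∀ u v, H u v =
      if arc u v then Complex.exp ((Real.pi / 3 : ℝ) * Complex.I)
      else if arc v u then Complex.exp (-((Real.pi / 3 : ℝ) * Complex.I)) else 0)
    (hHerm : H.IsHermitian)
    (hsym : ∃ σ : Equiv.Perm (Fin n), ∀ i, hHerm.eigenvalues (σ i) = - hHerm.eigenvalues i) :
    Matrix.trace ((G.adjMatrix ℝ) ^ 3)
      ≤ -18 * (G.edgeFinset.card : ℝ) * (⨅ i, hA.eigenvalues i) := by
  classical
  set A := G.adjMatrix ℝ with hAdef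
  set S : Matrix (Fin n) (Fin n) ℝ :=
    Matrix.of (fun u v => if arc u v then Real.sqrt 3 else if arc v u then -Real.sqrt 3 else 0)
    with hSdef
  -- eigenvalue sum of cubes is zero
  have hsum0 : ∑ i, (hHerm.eigenvalues i) ^ 3 = 0 := by
    obtain ⟨σ, hσ⟩ := hsym
    have h1 : ∑ i, (hHerm.eigenvalues (σ i)) ^ 3 = ∑ i, (hHerm.eigenvalues i) ^ 3 :=
      Equiv.sum_comp σ (fun i => (hHerm.eigenvalues i) ^ 3)
    have h2 : ∑ i, (hHerm.eigenvalues (σ i)) ^ 3 = -∑ i, (hHerm.eigenvalues i) ^ 3 := by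
      rw [← Finset.sum_neg_distrib]
      refine Finset.sum_congr rfl fun i _ => ?_
      rw [hσ i, Odd.neg_pow ⟨1, by norm_num⟩]
    linarith
  -- trace of H^3 via the spectral theorem
  have htrH3 : Matrix.trace (H ^ 3) = ∑ i, ((hHerm.eigenvalues i : ℝ) : ℂ) ^ 3 := by
    set V : Matrix (Fin n) (Fin n) ℂ :=
      (hHerm.eigenvectorUnitary : Matrix (Fin n) (Fin n) ℂ) with hVdef
    have hV : V * star V = 1 := (Matrix.mem_unitaryGroup_iff).mp hHerm.eigenvectorUnitary.2
    have hV' : star V * V = 1 := (Matrix.mem_unitaryGroup_iff').mp hHerm.eigenvectorUnitary.2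
    have cancel : ∀ X : Matrix (Fin n) (Fin n) ℂ, star V * (V * X) = X := fun X => by
      rw [← Matrix.mul_assoc, hV', Matrix.one_mul]
    have hp : H ^ 3 = V * (diagonal (RCLike.ofReal ∘ hHerm.eigenvalues)) ^ 3 * star V := by
      conv_lhs => rw [hHerm.spectral_theorem, Unitary.conjStarAlgAut_apply, ← hVdef]
      simp only [pow_succ, pow_zero, Matrix.one_mul, Matrix.mul_assoc, cancel]
    rw [hp, Matrix.trace_mul_cycle, hV', Matrix.one_mul, Matrix.diagonal_pow,
      Matrix.trace_diagonal]
    simp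
  have htrH0 : Matrix.trace (H ^ 3) = 0 := by
    rw [htrH3]
    have : ((∑ i, (hHerm.eigenvalues i) ^ 3 : ℝ) : ℂ) = 0 := by rw [hsum0]; norm_num
    rw [← this]
    push_cast
    rfl
  -- complex lifts
  set A' : Matrix (Fin n) (Fin n) ℂ := A.map Complex.ofReal with hA'def
  set S' : Matrix (Fin n) (Fin n) ℂ := S.map Complex.ofReal with hS'def
  -- 2H = A' + i S'
  have h2H : (2 : ℂ) • H = A' + Complex.I • S' := by
    ext u v
    rw [Matrix.add_apply, Matrix.smul_apply, Matrix.smul_apply, hH u v]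
    have hAuv : A u v = if G.Adj u v then (1:ℝ) else 0 := by
      simp [hAdef, SimpleGraph.adjMatrix_apply]
    by_cases h1 : arc u v
    · have hadj : G.Adj u v := (horient u v).mpr (Or.inl h1)
      rw [if_pos h1]
      simp only [hA'def, hS'def, Matrix.map_apply, hAuv, if_pos hadj, hSdef, Matrix.of_apply,
        if_pos h1]
      rw [Complex.exp_mul_I, ← Complex.ofReal_cos, ← Complex.ofReal_sin,
        Real.cos_pi_div_three, Real.sin_pi_div_three]
      push_cast
      simp only [smul_eq_mul]
      ring
    · by_cases h2 : arc v u
      · have hadj : G.Adj u v := (horient u v).mpr (Or.inr h2)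
        rw [if_neg h1, if_pos h2]
        simp only [hA'def, hS'def, Matrix.map_apply, hAuv, if_pos hadj, hSdef, Matrix.of_apply,
          if_neg h1, if_pos h2]
        rw [← neg_mul, ← Complex.ofReal_neg, Complex.exp_mul_I, ← Complex.ofReal_cos,
          ← Complex.ofReal_sin, Real.cos_neg, Real.sin_neg,
          Real.cos_pi_div_three, Real.sin_pi_div_three]
        push_cast
        simp only [smul_eq_mul]
        ring
      · have hadj : ¬ G.Adj u v := fun h => by rcases (horient u v).mp h with h' | h' <;> tauto
        rw [if_neg h1, if_neg h2]
        simp [hA'def, hS'def, Matrix.map_apply, hAuv, if_neg hadj, hSdef, h1, h2]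
  -- transpose facts
  have hST : S'ᵀ = -S' := by
    ext u v
    by_cases h1 : arc u v <;> by_cases h2 : arc v u
    · exact absurd h2 (hasym u v h1)
    all_goals simp [hS'def, hSdef, Matrix.transpose_apply, Matrix.map_apply, h1, h2]
  have hAT : A'ᵀ = A' := by
    rw [hA'def, ← Matrix.transpose_map, hAdef, SimpleGraph.transpose_adjMatrix]
  -- odd traces vanish
  have ht2 : Matrix.trace (A' * A' * S') = 0 := by
    have h := Matrix.trace_transpose (A' * A' * S')
    rw [Matrix.transpose_mul, Matrix.transpose_mul, hST, hAT, Matrix.neg_mul,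
      Matrix.trace_neg, Matrix.trace_mul_cycle, ← Matrix.mul_assoc] at h
    linear_combination Matrix.trace_mul_cycle A' A' S' - h / 2
  have ht3 : Matrix.trace (S' * S' * S') = 0 := by
    have h := Matrix.trace_transpose (S' * S' * S')
    rw [Matrix.transpose_mul, Matrix.transpose_mul, hST, ← Matrix.mul_assoc] at h
    simp only [Matrix.neg_mul, Matrix.mul_neg, neg_neg, Matrix.trace_neg] at h
    linear_combination - h / 2
  -- expansion of (A' + I•S')^3
  set B : Matrix (Fin n) (Fin n) ℂ := Complex.I • S' with hBdef
  have hexp : (A' + B) ^ 3 =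
      A' * A' * A' + (A' * A' * B + A' * B * A' + B * A' * A')
        + (A' * B * B + B * A' * B + B * B * A') + B * B * B := by
    noncomm_ring
  have htrsum : Matrix.trace ((A' + B) ^ 3) = 0 := by
    rw [← h2H, smul_pow, Matrix.trace_smul, htrH0, smul_zero]
  have hc1 : Matrix.trace (A' * S' * A') = Matrix.trace (A' * A' * S') :=
    Matrix.trace_mul_cycle A' S' A'
  have hc2 : Matrix.trace (S' * A' * A') = Matrix.trace (A' * A' * S') :=
    (Matrix.trace_mul_cycle A' A' S').symm
  have hd1 : Matrix.trace (S' * A' * S') = Matrix.trace (A' * S' * S') :=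
    (Matrix.trace_mul_cycle S' A' S').trans (Matrix.trace_mul_cycle S' S' A')
  have hd2 : Matrix.trace (S' * S' * A') = Matrix.trace (A' * S' * S') :=
    Matrix.trace_mul_cycle S' S' A'
  have hkey : Matrix.trace (A' * A' * A') = 3 * Matrix.trace (A' * S' * S') := by
    have h := htrsum
    rw [hexp] at h
    simp only [Matrix.trace_add, hBdef, Matrix.smul_mul, Matrix.mul_smul, Matrix.trace_smul,
      smul_eq_mul, smul_smul, Complex.I_mul_I] at h
    rw [hc1, hc2, hd1, hd2, ht2, ht3] at h
    linear_combination h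
  -- descend to the reals
  have htrmap : ∀ P : Matrix (Fin n) (Fin n) ℝ,
      Matrix.trace (P.map Complex.ofReal) = ((Matrix.trace P : ℝ) : ℂ) := by
    intro P; simp [Matrix.trace, Matrix.diag, Matrix.map_apply]
  have hmapmul : ∀ P Q : Matrix (Fin n) (Fin n) ℝ,
      (P * Q).map Complex.ofReal = P.map Complex.ofReal * Q.map Complex.ofReal := fun P Q =>
    Matrix.map_mul (f := Complex.ofRealHom)
  have hkeyR : Matrix.trace (A * A * A) = 3 * Matrix.trace (A * S * S) := by
    have : ((Matrix.trace (A * A * A) : ℝ) : ℂ) = ((3 * Matrix.trace (A * S * S) : ℝ) : ℂ) := by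
      rw [Complex.ofReal_mul, ← htrmap, ← htrmap, hmapmul, hmapmul, hmapmul, hmapmul,
        ← hA'def, ← hS'def, hkey]
      norm_num
    exact_mod_cast this
  -- the positive semidefinite matrix S Sᵀ
  have hSTr : Sᵀ = -S := by
    ext u v
    by_cases h1 : arc u v <;> by_cases h2 : arc v u
    · exact absurd h2 (hasym u v h1)
    all_goals simp [hSdef, Matrix.transpose_apply, h1, h2]
  have hSconj : Sᴴ = Sᵀ := by
    ext u v; simp [Matrix.conjTranspose_apply, Matrix.transpose_apply]
  have hMpsd : (S * Sᵀ).PosSemidef := by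
    rw [← hSconj]; exact Matrix.posSemidef_self_mul_conjTranspose S
  have hSS : A * S * S = -(A * (S * Sᵀ)) := by
    rw [hSTr]; simp [Matrix.mul_neg, Matrix.mul_assoc]
  -- trace of S Sᵀ is 6m
  have htrM : Matrix.trace (S * Sᵀ) = 6 * (G.edgeFinset.card : ℝ) := by
    have hsq : ∀ i j, S i j * S i j = if G.Adj i j then (3:ℝ) else 0 := by
      intro i j
      by_cases h1 : arc i j
      · rw [if_pos ((horient i j).mpr (Or.inl h1))]
        simp [hSdef, h1, Real.mul_self_sqrt (by norm_num : (3:ℝ) ≥ 0)]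
      · by_cases h2 : arc j i
        · rw [if_pos ((horient i j).mpr (Or.inr h2))]
          simp [hSdef, h1, h2, Real.mul_self_sqrt (by norm_num : (3:ℝ) ≥ 0)]
        · have : ¬ G.Adj i j := fun h => by rcases (horient i j).mp h with h' | h' <;> tauto
          rw [if_neg this]
          simp [hSdef, h1, h2]
    have step1 : Matrix.trace (S * Sᵀ) = ∑ i, ∑ j, S i j * S i j := by
      simp [Matrix.trace, Matrix.diag, Matrix.mul_apply, Matrix.transpose_apply]
    rw [step1]
    have step2 : ∀ i : Fin n, ∑ j, S i j * S i j = 3 * (G.degree i : ℝ) := by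
      intro i
      simp only [hsq]
      rw [← Finset.sum_filter, Finset.sum_const, ← SimpleGraph.neighborFinset_eq_filter,
        SimpleGraph.card_neighborFinset_eq_degree, nsmul_eq_mul, mul_comm]
    rw [Finset.sum_congr rfl fun i _ => step2 i, ← Finset.mul_sum]
    have : ∑ i : Fin n, (G.degree i : ℝ) = 2 * (G.edgeFinset.card : ℝ) := by
      have := G.sum_degrees_eq_twice_card_edges
      exact_mod_cast congrArg (Nat.cast : ℕ → ℝ) this
    rw [this]; ring
  -- finish
  have hineq := trace_mul_psd_ge A (S * Sᵀ) hA hMpsd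
  have htr3 : Matrix.trace (A ^ 3) = Matrix.trace (A * A * A) := by
    rw [pow_succ, pow_succ, pow_one]
  rw [htr3, hkeyR, hSS, Matrix.trace_neg, htrM] at *
  nlinarith [hineq]
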